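/- For every t > 0, ∫₀ᵗ (1/(2π(t−s))) · ( ∫_ℝ (2πs)^{−1/2} exp(−y²/(2s)) · exp(−y²/(t−s)) dy ) ds = 1/4. -/

import Mathlib

open MeasureTheory Real

private lemma rpow_neg_half_eq_inv_sqrt {x : ℝ} (hx : 0 ≤ x) :
    x ^ (-(1:ℝ) / 2) = (Real.sqrt x)⁻¹ := by
  rw [Real.sqrt_eq_rpow, ← Real.rpow_neg hx]
  norm_num

/-- The annealed variance of the catalytic O-U process in dimension one at `x = 0`:
`∫₀ᵗ (1/(2π(t−s))) (∫_ℝ (2πs)^{−1/2} exp(−y²/(2s)) exp(−y²/(t−s)) dy) ds = 1/4`. -/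
theorem annealed_variance_at_zero (t : ℝ) (ht : 0 < t) :
    ∫ s in (0:ℝ)..t,
        (1 / (2 * Real.pi * (t - s))) *
          ∫ y : ℝ, (2 * Real.pi * s) ^ (-(1:ℝ) / 2) * Real.exp (-y ^ 2 / (2 * s)) *
            Real.exp (-y ^ 2 / (t - s))
      = 1 / 4 := by
  have hπ : (0:ℝ) < Real.pi := Real.pi_pos
  -- Step 1: identify the integrand with `(2π)⁻¹ (t²-s²)^{-1/2}` on `(0,t)`.
  have hcong : ∀ s ∈ Set.Ioo (0:ℝ) t,
      (1 / (2 * Real.pi * (t - s))) *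
          (∫ y : ℝ, (2 * Real.pi * s) ^ (-(1:ℝ) / 2) * Real.exp (-y ^ 2 / (2 * s)) *
            Real.exp (-y ^ 2 / (t - s)))
        = (1 / (2 * Real.pi)) * (Real.sqrt (t ^ 2 - s ^ 2))⁻¹ := by
    intro s hs
    obtain ⟨hs0, hst⟩ := hs
    have hts : 0 < t - s := by linarith
    have hts' : 0 < t + s := by linarith
    set a : ℝ := (t + s) / (2 * s * (t - s)) with ha
    have ha0 : 0 < a := div_pos hts' (by positivity)
    have hinner : (∫ y : ℝ, (2 * Real.pi * s) ^ (-(1:ℝ) / 2) * Real.exp (-y ^ 2 / (2 * s)) *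
            Real.exp (-y ^ 2 / (t - s)))
        = (2 * Real.pi * s) ^ (-(1:ℝ) / 2) * Real.sqrt (Real.pi / a) := by
      rw [← integral_gaussian a, ← MeasureTheory.integral_const_mul]
      congr 1 with y
      rw [mul_assoc, ← Real.exp_add]
      congr 2
      rw [ha]
      field_simp
      ring
    rw [hinner, rpow_neg_half_eq_inv_sqrt (by positivity)]
    have key : Real.pi / a / (2 * Real.pi * s) = (t - s) / (t + s) := by
      rw [ha]
      field_simp
    have h1 : (Real.sqrt (2 * Real.pi * s))⁻¹ * Real.sqrt (Real.pi / a)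
        = Real.sqrt (t - s) / Real.sqrt (t + s) := by
      rw [inv_mul_eq_div, ← Real.sqrt_div (by positivity), key, Real.sqrt_div hts.le]
    have h2 : Real.sqrt (t ^ 2 - s ^ 2) = Real.sqrt (t - s) * Real.sqrt (t + s) := by
      rw [← Real.sqrt_mul hts.le]
      ring_nf
    rw [h1, h2]
    have hu : 0 < Real.sqrt (t - s) := Real.sqrt_pos.2 hts
    have hv : 0 < Real.sqrt (t + s) := Real.sqrt_pos.2 hts'
    have hu2 : Real.sqrt (t - s) ^ 2 = t - s := Real.sq_sqrt hts.le
    field_simp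
    linear_combination hu2
  -- Step 2: replace the integrand a.e.
  have hae : ∫ s in (0:ℝ)..t,
        (1 / (2 * Real.pi * (t - s))) *
          (∫ y : ℝ, (2 * Real.pi * s) ^ (-(1:ℝ) / 2) * Real.exp (-y ^ 2 / (2 * s)) *
            Real.exp (-y ^ 2 / (t - s)))
      = ∫ s in (0:ℝ)..t, (1 / (2 * Real.pi)) * (Real.sqrt (t ^ 2 - s ^ 2))⁻¹ := by
    apply intervalIntegral.integral_congr_ae
    have hne : ∀ᵐ s : ℝ, s ≠ t := by
      rw [ae_iff]
      simpa using measure_singleton t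
    filter_upwards [hne] with s hst hmem
    rw [Set.uIoc_of_le ht.le] at hmem
    exact hcong s ⟨hmem.1, lt_of_le_of_ne hmem.2 hst⟩
  rw [hae]
  -- Step 3: integrability of the new integrand.
  have hint : IntervalIntegrable (fun s => (1 / (2 * Real.pi)) * (Real.sqrt (t ^ 2 - s ^ 2))⁻¹)
      volume 0 t := by
    have h1 : IntervalIntegrable (fun x : ℝ => x ^ (-(1:ℝ) / 2)) volume t 0 :=
      intervalIntegral.intervalIntegrable_rpow' (by norm_num)
    have h2 := h1.comp_sub_left t
    simp only [sub_self, sub_zero] at h2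
    have h3 := h2.const_mul ((2 * Real.pi * Real.sqrt t)⁻¹)
    apply h3.mono_fun'
    · apply AEStronglyMeasurable.const_mul
      apply Measurable.aestronglyMeasurable
      exact ((measurable_const.sub (measurable_id.pow_const 2)).sqrt).inv
    · rw [Set.uIoc_of_le ht.le]
      refine (ae_restrict_iff' measurableSet_Ioc).2 (Filter.Eventually.of_forall fun x hx => ?_)
      obtain ⟨hx0, hxt⟩ := hx
      have hxt' : 0 ≤ t - x := by linarith
      have hbound : (Real.sqrt (t ^ 2 - x ^ 2))⁻¹
          ≤ (Real.sqrt t)⁻¹ * (Real.sqrt (t - x))⁻¹ := by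
        rcases eq_or_lt_of_le hxt' with h | h
        · rw [show t ^ 2 - x ^ 2 = 0 by nlinarith, Real.sqrt_zero, ← h, Real.sqrt_zero]
          simp
        · have hfac : Real.sqrt t * Real.sqrt (t - x) ≤ Real.sqrt (t ^ 2 - x ^ 2) := by
            rw [← Real.sqrt_mul ht.le]
            apply Real.sqrt_le_sqrt
            nlinarith
          rw [← mul_inv]
          apply inv_anti₀
          · positivity
          · exact hfac
      have hnorm : ‖(1 / (2 * Real.pi)) * (Real.sqrt (t ^ 2 - x ^ 2))⁻¹‖
          = (1 / (2 * Real.pi)) * (Real.sqrt (t ^ 2 - x ^ 2))⁻¹ := by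
        rw [Real.norm_eq_abs, abs_of_nonneg]
        positivity
      dsimp only
      rw [hnorm, rpow_neg_half_eq_inv_sqrt hxt']
      calc (1 / (2 * Real.pi)) * (Real.sqrt (t ^ 2 - x ^ 2))⁻¹
          ≤ (1 / (2 * Real.pi)) * ((Real.sqrt t)⁻¹ * (Real.sqrt (t - x))⁻¹) := by
            apply mul_le_mul_of_nonneg_left hbound (by positivity)
        _ = (2 * Real.pi * Real.sqrt t)⁻¹ * (Real.sqrt (t - x))⁻¹ := by
            rw [mul_inv, mul_inv]
            ring
  -- Step 4: FTC with antiderivative `(2π)⁻¹ arcsin (s/t)`.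
  have hftc : ∫ s in (0:ℝ)..t, (1 / (2 * Real.pi)) * (Real.sqrt (t ^ 2 - s ^ 2))⁻¹
      = (1 / (2 * Real.pi)) * Real.arcsin (t / t) - (1 / (2 * Real.pi)) * Real.arcsin (0 / t) := by
    apply intervalIntegral.integral_eq_sub_of_hasDeriv_right_of_le
      (f := fun s => (1 / (2 * Real.pi)) * Real.arcsin (s / t)) ht.le
    · exact (continuous_const.mul
        (Real.continuous_arcsin.comp (continuous_id.div_const t))).continuousOn
    · intro x hx
      obtain ⟨hx0, hxt⟩ := hx
      have hx1 : x / t < 1 := (div_lt_one ht).2 hxt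
      have hx1' : -1 < x / t := by
        have : 0 < x / t := div_pos hx0 ht
        linarith
      have hd : HasDerivAt (fun s : ℝ => Real.arcsin (s / t))
          (1 / Real.sqrt (1 - (x / t) ^ 2) * (1 / t)) x := by
        have := (Real.hasDerivAt_arcsin (by linarith) (ne_of_lt hx1)).comp x
          ((hasDerivAt_id x).div_const t)
        simpa [Function.comp_def] using this
      have heq : (1 / (2 * Real.pi)) * (1 / Real.sqrt (1 - (x / t) ^ 2) * (1 / t))
          = (1 / (2 * Real.pi)) * (Real.sqrt (t ^ 2 - x ^ 2))⁻¹ := by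
        have h5 : 1 - (x / t) ^ 2 = (t ^ 2 - x ^ 2) / t ^ 2 := by
          field_simp
        have hpos : 0 < t ^ 2 - x ^ 2 := by nlinarith
        rw [h5, Real.sqrt_div hpos.le, Real.sqrt_sq ht.le]
        have hsp : 0 < Real.sqrt (t ^ 2 - x ^ 2) := Real.sqrt_pos.2 hpos
        field_simp
      rw [← heq]
      exact ((hd.const_mul (1 / (2 * Real.pi))).hasDerivWithinAt)
    · exact hint
  rw [hftc, div_self ht.ne', zero_div, Real.arcsin_one, Real.arcsin_zero]
  field_simp
  ring
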